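/- If v, w ∈ L := {(x,τ) ∈ ℝ^{n+1} : ‖x‖ ≤ τ} (the second-order cone), then the matrix wvᵀ + vwᵀ can be written as P + ηJ with P ⪰ 0 and η ≥ 0, where J = diag(−I_n, 1). -/

import Mathlib

open scoped Matrix
open Matrix

private lemma neg_le_of_sq_le_sq (u s : ℝ) (h : u^2 ≤ s^2) (hs : 0 ≤ s) : -s ≤ u := by
  nlinarith [sq_nonneg (u + s), sq_nonneg (u - s)]

private lemma dot_self_nonneg {m : ℕ} (a : Fin m → ℝ) : 0 ≤ a ⬝ᵥ a :=
  Finset.sum_nonneg fun i _ => mul_self_nonneg _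

private lemma dot_sq_le {m : ℕ} (a b : Fin m → ℝ) : (a ⬝ᵥ b)^2 ≤ (a ⬝ᵥ a) * (b ⬝ᵥ b) := by
  simpa [dotProduct, sq] using Finset.sum_mul_sq_le_sq_mul_sq Finset.univ a b

private lemma gram_det_nonneg {m : ℕ} (a b c : Fin m → ℝ) :
    0 ≤ (a⬝ᵥa)*(b⬝ᵥb)*(c⬝ᵥc) + 2*(a⬝ᵥb)*(a⬝ᵥc)*(b⬝ᵥc)
        - (a⬝ᵥa)*(b⬝ᵥc)^2 - (b⬝ᵥb)*(a⬝ᵥc)^2 - (c⬝ᵥc)*(a⬝ᵥb)^2 := by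
  set A := a⬝ᵥa with hAdef; set B := b⬝ᵥb with hBdef; set X := c⬝ᵥc with hXdef
  set p := a⬝ᵥc with hpdef; set q := b⬝ᵥc with hqdef; set cc := a⬝ᵥb with hccdef
  have hB : 0 ≤ B := dot_self_nonneg b
  rcases eq_or_lt_of_le hB with hB0 | hBpos
  · have h1 : q^2 ≤ B * X := dot_sq_le b c
    have h2 : cc^2 ≤ A * B := by
      have := dot_sq_le a b; simpa [mul_comm] using this
    have hX : 0 ≤ X := dot_self_nonneg c
    have hA : 0 ≤ A := dot_self_nonneg a
    have hq0 : q = 0 := by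
      have : q^2 = 0 := le_antisymm (by nlinarith) (sq_nonneg q)
      exact sq_eq_zero_iff.mp this
    have hcc0 : cc = 0 := by
      have : cc^2 = 0 := le_antisymm (by nlinarith) (sq_nonneg cc)
      exact sq_eq_zero_iff.mp this
    rw [hq0, hcc0, ← hB0]; ring_nf; rfl
  · have hu : (B • a - cc • b) ⬝ᵥ (B • a - cc • b) = B * (A*B - cc^2) := by
      simp only [sub_dotProduct, dotProduct_sub, smul_dotProduct, dotProduct_smul,
        smul_eq_mul, dotProduct_comm b a, ← hAdef, ← hBdef, ← hccdef]
      ring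
    have hz : (B • c - q • b) ⬝ᵥ (B • c - q • b) = B * (B*X - q^2) := by
      simp only [sub_dotProduct, dotProduct_sub, smul_dotProduct, dotProduct_smul,
        smul_eq_mul, dotProduct_comm c b, ← hXdef, ← hBdef, ← hqdef]
      ring
    have huz : (B • a - cc • b) ⬝ᵥ (B • c - q • b) = B * (B*p - cc*q) := by
      simp only [sub_dotProduct, dotProduct_sub, smul_dotProduct, dotProduct_smul,
        smul_eq_mul, dotProduct_comm c b, dotProduct_comm b a,
        ← hpdef, ← hBdef, ← hqdef, ← hccdef]
      ring
    have hcs := dot_sq_le (B • a - cc • b) (B • c - q • b)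
    rw [hu, hz, huz] at hcs
    have hB3 : (0:ℝ) < B^3 := pow_pos hBpos 3
    have hD : 0 ≤ B^3 * (A*B*X + 2*cc*p*q - A*q^2 - B*p^2 - X*cc^2) := by nlinarith [hcs]
    exact (mul_nonneg_iff_of_pos_left hB3).mp hD

private lemma key_scalar (A B X p q cc α β t : ℝ)
    (hA0 : 0 ≤ A) (hB0 : 0 ≤ B) (hX : 0 ≤ X)
    (hp : p^2 ≤ A*X) (hq : q^2 ≤ B*X) (hc : cc^2 ≤ A*B)
    (hdet : 0 ≤ A*B*X + 2*cc*p*q - A*q^2 - B*p^2 - X*cc^2)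
    (hα : A ≤ α^2) (hβ : B ≤ β^2) (hα0 : 0 ≤ α) (hβ0 : 0 ≤ β) :
    0 ≤ 2*((p + α*t)*(q + β*t)) - (α*β - cc)*(t^2 - X) := by
  have hAB : A*B ≤ α^2*β^2 := by nlinarith [mul_le_mul hα hβ hB0 (sq_nonneg α)]
  have hs : 0 ≤ α*β + cc := by
    have := neg_le_of_sq_le_sq cc (α*β) (by nlinarith) (mul_nonneg hα0 hβ0)
    linarith
  have hg : 0 ≤ (α^2*β^2 - cc^2)*X + 2*cc*p*q - β^2*p^2 - α^2*q^2 := by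
    nlinarith [mul_nonneg (mul_nonneg (sub_nonneg.2 hα) (sub_nonneg.2 hβ)) hX,
      mul_le_mul_of_nonneg_left hp (sub_nonneg.2 hβ),
      mul_le_mul_of_nonneg_left hq (sub_nonneg.2 hα)]
  rcases eq_or_lt_of_le hs with hs0 | hspos
  · have hcc : cc = -(α*β) := by linarith
    have hg' : (β*p + α*q)^2 ≤ 0 := by rw [hcc] at hg; nlinarith [hg]
    have h1 : β*p + α*q = 0 :=
      sq_eq_zero_iff.mp (le_antisymm hg' (sq_nonneg _))
    have h2 : (p*q)^2 ≤ (α*β*X)^2 := by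
      nlinarith [mul_le_mul hp hq (sq_nonneg q) (mul_nonneg hA0 hX),
        mul_le_mul_of_nonneg_right hAB (sq_nonneg X)]
    have h3 : 0 ≤ α*β*X := mul_nonneg (mul_nonneg hα0 hβ0) hX
    have h4 : -(α*β*X) ≤ p*q := neg_le_of_sq_le_sq _ _ h2 h3
    have h1t : t*(β*p + α*q) = 0 := by rw [h1, mul_zero]
    nlinarith [h1t, h4, hcc]
  · have hsf : (α*β+cc) * (2*((p + α*t)*(q + β*t)) - (α*β - cc)*(t^2 - X))
        = ((α*β+cc)*t + (β*p + α*q))^2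
          + ((α^2*β^2 - cc^2)*X + 2*cc*p*q - β^2*p^2 - α^2*q^2) := by ring
    have h9 : 0 ≤ (α*β+cc) * (2*((p + α*t)*(q + β*t)) - (α*β - cc)*(t^2 - X)) := by
      rw [hsf]; exact add_nonneg (sq_nonneg _) hg
    exact (mul_nonneg_iff_of_pos_left hspos).mp h9

theorem rank_two_in_psd_plus_coneJ {n : ℕ}
    (J : Matrix (Fin (n + 1)) (Fin (n + 1)) ℝ)
    (hJ : J = Matrix.diagonal (Fin.snoc (fun _ : Fin n => (-1 : ℝ)) 1))
    (v w : Fin (n + 1) → ℝ)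
    (hv : Real.sqrt ((fun i : Fin n => v i.castSucc) ⬝ᵥ (fun i : Fin n => v i.castSucc)) ≤
      v (Fin.last n))
    (hw : Real.sqrt ((fun i : Fin n => w i.castSucc) ⬝ᵥ (fun i : Fin n => w i.castSucc)) ≤
      w (Fin.last n)) :
    ∃ (P : Matrix (Fin (n + 1)) (Fin (n + 1)) ℝ) (η : ℝ),
      P.PosSemidef ∧ 0 ≤ η ∧ vecMulVec w v + vecMulVec v w = P + η • J := by
  set a : Fin n → ℝ := fun i => v i.castSucc with ha
  set b : Fin n → ℝ := fun i => w i.castSucc with hb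
  set α : ℝ := v (Fin.last n) with hα
  set β : ℝ := w (Fin.last n) with hβ
  have hA0 : 0 ≤ a ⬝ᵥ a := dot_self_nonneg a
  have hB0 : 0 ≤ b ⬝ᵥ b := dot_self_nonneg b
  have hα0 : 0 ≤ α := le_trans (Real.sqrt_nonneg _) hv
  have hβ0 : 0 ≤ β := le_trans (Real.sqrt_nonneg _) hw
  have hαsq : a ⬝ᵥ a ≤ α^2 := by
    calc a ⬝ᵥ a = (Real.sqrt (a ⬝ᵥ a))^2 := (Real.sq_sqrt hA0).symm
    _ ≤ α^2 := pow_le_pow_left₀ (Real.sqrt_nonneg _) hv 2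
  have hβsq : b ⬝ᵥ b ≤ β^2 := by
    calc b ⬝ᵥ b = (Real.sqrt (b ⬝ᵥ b))^2 := (Real.sq_sqrt hB0).symm
    _ ≤ β^2 := pow_le_pow_left₀ (Real.sqrt_nonneg _) hw 2
  set η : ℝ := α*β - a ⬝ᵥ b with hη
  have hAB : (a⬝ᵥa)*(b⬝ᵥb) ≤ α^2*β^2 := by
    nlinarith [mul_le_mul hαsq hβsq hB0 (sq_nonneg α)]
  have hη0 : 0 ≤ η := by
    have h := neg_le_of_sq_le_sq (-(a ⬝ᵥ b)) (α*β)
      (by nlinarith [dot_sq_le a b]) (mul_nonneg hα0 hβ0)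
    rw [hη]; linarith
  refine ⟨vecMulVec w v + vecMulVec v w - η • J, η, posSemidef_iff_dotProduct_mulVec.mpr ⟨?_, ?_⟩, hη0, by abel⟩
  · -- Hermitian
    have h1 : (vecMulVec w v + vecMulVec v w).IsHermitian := by
      ext i j
      simp only [Matrix.conjTranspose_apply, Matrix.add_apply, vecMulVec_apply, star_trivial]
      ring
    have h2 : (η • J).IsHermitian := by
      rw [hJ]
      ext i j
      by_cases h : i = j <;>
        simp [Matrix.conjTranspose_apply, Matrix.diagonal_apply, Matrix.smul_apply, h, eq_comm]
    exact h1.sub h2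
  · intro x
    set x' : Fin n → ℝ := fun i => x i.castSucc with hx'
    set t : ℝ := x (Fin.last n) with htdef
    have hsplit : ∀ u y : Fin (n+1) → ℝ,
        u ⬝ᵥ y = (fun i : Fin n => u i.castSucc) ⬝ᵥ (fun i : Fin n => y i.castSucc)
          + u (Fin.last n) * y (Fin.last n) := by
      intro u y; simp [dotProduct, Fin.sum_univ_castSucc]
    have hmv : ∀ u y : Fin (n+1) → ℝ, (vecMulVec u y) *ᵥ x = (y ⬝ᵥ x) • u := by
      intro u y; ext i
      simp only [mulVec, vecMulVec_apply, dotProduct, Pi.smul_apply, smul_eq_mul,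
        Finset.sum_mul]
      exact Finset.sum_congr rfl fun j _ => by ring
    have hJx : x ⬝ᵥ (J *ᵥ x) = t^2 - x' ⬝ᵥ x' := by
      rw [hJ]
      simp only [dotProduct, mulVec_diagonal]
      rw [Fin.sum_univ_castSucc]
      simp only [Fin.snoc_castSucc, Fin.snoc_last, hx', htdef]
      simp [dotProduct]
      ring
    have hquad : star x ⬝ᵥ ((vecMulVec w v + vecMulVec v w - η • J) *ᵥ x)
        = 2*(((a ⬝ᵥ x') + α*t)*((b ⬝ᵥ x') + β*t)) - η*(t^2 - x' ⬝ᵥ x') := by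
      rw [star_trivial, sub_mulVec, add_mulVec, smul_mulVec,
        dotProduct_sub, dotProduct_add, dotProduct_smul, hmv, hmv, hJx,
        dotProduct_smul, dotProduct_smul, smul_eq_mul, smul_eq_mul, smul_eq_mul,
        dotProduct_comm x w, dotProduct_comm x v, hsplit v x, hsplit w x]
      rw [← ha, ← hb, ← hα, ← hβ, ← hx', ← htdef]
      ring
    rw [hquad]
    exact key_scalar (a⬝ᵥa) (b⬝ᵥb) (x'⬝ᵥx') (a⬝ᵥx') (b⬝ᵥx') (a⬝ᵥb) α β t
      hA0 hB0 (dot_self_nonneg x') (dot_sq_le a x') (dot_sq_le b x') (dot_sq_le a b)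
      (gram_det_nonneg a b x') hαsq hβsq hα0 hβ0
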